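/- For every real number k ≥ 1 and all real numbers x, y ≥ 0, one has (x + y)^k ≤ x^k + 2^{k−1}·k·y·(x^{k−1} + y^{k−1}). -/

import Mathlib

open Real

private lemma bernoulli_step (k x y : ℝ) (hk : 1 ≤ k) (hx : 0 ≤ x) (hy : 0 ≤ y) :
    (x + y) ^ k ≤ x ^ k + k * y * (x + y) ^ (k - 1) := by
  rcases eq_or_lt_of_le (by positivity : (0:ℝ) ≤ x + y) with h | h
  · rw [← h]
    have hk0 : k ≠ 0 := by linarith
    simp [Real.zero_rpow hk0]
    positivity
  · have hs : -1 ≤ -y / (x + y) := by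
      rw [neg_div, neg_le_neg_iff, div_le_one h]; linarith
    have hB := one_add_mul_self_le_rpow_one_add hs hk
    have key : 1 + -y / (x + y) = x / (x + y) := by field_simp; ring
    rw [key] at hB
    have hB' : (x + y) ^ k * (1 + k * (-y / (x + y))) ≤ (x + y) ^ k * (x / (x + y)) ^ k :=
      mul_le_mul_of_nonneg_left hB (rpow_nonneg h.le k)
    have h1 : (x + y) ^ k * (x / (x + y)) ^ k = x ^ k := by
      rw [div_rpow hx h.le, mul_div_cancel₀]
      exact (rpow_pos_of_pos h k).ne'
    have h2 : (x + y) ^ k * (1 + k * (-y / (x + y)))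
        = (x + y) ^ k - k * y * (x + y) ^ (k - 1) := by
      have : (x + y) ^ k / (x + y) = (x + y) ^ (k - 1) := by
        rw [Real.rpow_sub h, rpow_one]
      rw [← this]
      field_simp
      ring
    rw [h1, h2] at hB'
    linarith

private lemma two_step (q x y : ℝ) (hq : 0 ≤ q) (hx : 0 ≤ x) (hy : 0 ≤ y) :
    (x + y) ^ q ≤ 2 ^ q * (x ^ q + y ^ q) := by
  have h1 : x + y ≤ 2 * max x y := by
    rcases le_total x y with h | h
    · simp [max_eq_right h]; linarith
    · simp [max_eq_left h]; linarith
  have h2 : (x + y) ^ q ≤ (2 * max x y) ^ q :=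
    rpow_le_rpow (by positivity) h1 hq
  have h3 : (2 * max x y) ^ q = 2 ^ q * (max x y) ^ q :=
    mul_rpow (by norm_num) (le_max_of_le_left hx)
  have h4 : (max x y) ^ q ≤ x ^ q + y ^ q := by
    rcases le_total x y with h | h
    · rw [max_eq_right h]; nlinarith [rpow_nonneg hx q]
    · rw [max_eq_left h]; nlinarith [rpow_nonneg hy q]
  calc (x + y) ^ q ≤ (2 * max x y) ^ q := h2
    _ = 2 ^ q * (max x y) ^ q := h3
    _ ≤ 2 ^ q * (x ^ q + y ^ q) := by
        exact mul_le_mul_of_nonneg_left h4 (rpow_nonneg (by norm_num) q)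

/-- For `k ≥ 1` and `x, y ≥ 0`: `(x + y)^k ≤ x^k + 2^{k-1} k y (x^{k-1} + y^{k-1})`. -/
theorem add_rpow_le (k x y : ℝ) (hk : 1 ≤ k) (hx : 0 ≤ x) (hy : 0 ≤ y) :
    (x + y) ^ k ≤ x ^ k + 2 ^ (k - 1) * k * y * (x ^ (k - 1) + y ^ (k - 1)) := by
  have h1 := bernoulli_step k x y hk hx hy
  have h2 := two_step (k - 1) x y (by linarith) hx hy
  have hk0 : 0 ≤ k := by linarith
  have h3 : k * y * (x + y) ^ (k - 1) ≤ k * y * (2 ^ (k - 1) * (x ^ (k - 1) + y ^ (k - 1))) :=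
    mul_le_mul_of_nonneg_left h2 (by positivity)
  nlinarith [h3]
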